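/- Let α, b ≥ 0, let a₀, …, a_{N−1} ≥ 0 and R₁, …, R_{N−1} ≥ 0 be real numbers such that R_l ≤ √2 · √(∑_{k=0}^{l−1} a_k + bα ∑_{k=1}^{l−1} R_k) for all l = 1, …, N. Then for all l = 1, …, N, ∑_{k=0}^{l−1} a_k + bα ∑_{k=1}^{l−1} R_k ≤ (√(∑_{k=0}^{l−1} a_k) + √2 · bα · l)². -/
import Mathlib


theorem stmt_4 (N : ℕ) (α b : ℝ) (a R : ℕ → ℝ)
    (hα : 0 ≤ α) (hb : 0 ≤ b)
    (ha : ∀ k, 0 ≤ a k) (hR : ∀ k, 0 ≤ R k)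
    (hyp : ∀ l, 1 ≤ l → l ≤ N →
      R l ≤ Real.sqrt 2 * Real.sqrt (∑ k ∈ Finset.range l, a k +
        b * α * ∑ k ∈ Finset.Ico 1 l, R k)) :
    ∀ l, 1 ≤ l → l ≤ N →
      ∑ k ∈ Finset.range l, a k + b * α * ∑ k ∈ Finset.Ico 1 l, R k ≤
        (Real.sqrt (∑ k ∈ Finset.range l, a k) + Real.sqrt 2 * b * α * l) ^ 2 := by
  intro l hl1
  induction l, hl1 using Nat.le_induction with
  | base =>
    intro _
    simp only [Finset.range_one, Finset.sum_singleton, Finset.Ico_self,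
      Finset.sum_empty, mul_zero, add_zero, Nat.cast_one, mul_one]
    have h1 : 0 ≤ a 0 := ha 0
    have hs : Real.sqrt (a 0) ^ 2 = a 0 := Real.sq_sqrt h1
    have h2 : (0:ℝ) ≤ Real.sqrt 2 * b * α := by positivity
    nlinarith [Real.sqrt_nonneg (a 0)]
  | succ l hl ih =>
    intro hN
    have hlN : l ≤ N := le_trans (Nat.le_succ l) hN
    have ih' := ih hlN
    set A := ∑ k ∈ Finset.range l, a k with hA
    set T := ∑ k ∈ Finset.Ico 1 l, R k with hT
    have hA0 : 0 ≤ A := Finset.sum_nonneg fun k _ => ha k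
    have hT0 : 0 ≤ T := Finset.sum_nonneg fun k _ => hR k
    have hS0 : 0 ≤ A + b * α * T := by positivity
    have hRl : R l ≤ Real.sqrt 2 * Real.sqrt (A + b * α * T) := hyp l hl hlN
    have hsum1 : ∑ k ∈ Finset.range (l+1), a k = A + a l := Finset.sum_range_succ a l
    have hsum2 : ∑ k ∈ Finset.Ico 1 (l+1), R k = T + R l :=
      Finset.sum_Ico_succ_top hl R
    rw [hsum1, hsum2]
    -- √S ≤ √A + √2 b α l
    have hrhs0 : (0:ℝ) ≤ Real.sqrt A + Real.sqrt 2 * b * α * l := by positivity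
    have hsqS : Real.sqrt (A + b * α * T) ≤ Real.sqrt A + Real.sqrt 2 * b * α * l := by
      have := Real.sqrt_le_sqrt ih'
      rwa [Real.sqrt_sq hrhs0] at this
    have hRl' : R l ≤ Real.sqrt 2 * (Real.sqrt A + Real.sqrt 2 * b * α * l) := by
      calc R l ≤ Real.sqrt 2 * Real.sqrt (A + b * α * T) := hRl
        _ ≤ Real.sqrt 2 * (Real.sqrt A + Real.sqrt 2 * b * α * l) := by
            have h2 : (0:ℝ) ≤ Real.sqrt 2 := Real.sqrt_nonneg 2
            nlinarith
    have hs2 : Real.sqrt 2 ^ 2 = 2 := Real.sq_sqrt (by norm_num)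
    have hsA : Real.sqrt A ^ 2 = A := Real.sq_sqrt hA0
    have hsA' : Real.sqrt (A + a l) ^ 2 = A + a l :=
      Real.sq_sqrt (by have := ha l; linarith)
    have hmono : Real.sqrt A ≤ Real.sqrt (A + a l) :=
      Real.sqrt_le_sqrt (by have := ha l; linarith)
    have hl0 : (0:ℝ) ≤ (l:ℝ) := Nat.cast_nonneg l
    push_cast
    have hba : (0:ℝ) ≤ b * α := mul_nonneg hb hα
    have h2n : (0:ℝ) ≤ Real.sqrt 2 := Real.sqrt_nonneg 2
    have hsA0 : (0:ℝ) ≤ Real.sqrt A := Real.sqrt_nonneg A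
    have hsA0' : (0:ℝ) ≤ Real.sqrt (A + a l) := Real.sqrt_nonneg _
    nlinarith [mul_nonneg (mul_nonneg (mul_nonneg h2n hba) hl0)
        (sub_nonneg.mpr hmono),
      mul_nonneg (mul_nonneg h2n hba) (sub_nonneg.mpr hmono),
      mul_nonneg hba (hR l), sq_nonneg (b*α), mul_nonneg hba hl0,
      mul_nonneg (mul_nonneg hba hba) hl0]
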